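/- arXiv:2408.01352 — 2 statements merged into one kernel-verified Lean document; each statement's English description precedes it below -/
import Mathlib

section
/- Let n ≥ 1 and 0 ≤ k ≤ n be integers, and let τ be a form of bidegree (n−k, k) on ℝ^n × ℝ^n. Then τ is positive if and only if for every point (x,ξ) ∈ ℝ^n × ℝ^n and every positively oriented orthonormal basis e_1, …, e_n of ℝ^n one has τ_{(x,ξ)}((e_1,0), …, (e_{n−k},0), (0,e_{n−k+1}), …, (0,e_n)) ≥ 0. -/
/-!
Statement 17: a form of bidegree `(n-k, k)` on `ℝⁿ × ℝⁿ` is positive if and only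
if it is nonnegative on all frames `((e_1,0),…,(e_{n-k},0),(0,e_{n-k+1}),…,(0,e_n))`
coming from positively oriented orthonormal bases.
-/

noncomputable section

open scoped Classical

/-- `ℝⁿ` with its Euclidean structure. -/
abbrev En (n : ℕ) := EuclideanSpace ℝ (Fin n)

/-- A (continuous) form of bidegree `(n-k, k)` on `ℝⁿ × ℝⁿ`: a continuous assignment
of alternating `n`-linear forms on `ℝⁿ × ℝⁿ` vanishing whenever at least `n-k+1`
arguments lie in `ℝⁿ × {0}` or at least `k+1` arguments lie in `{0} × ℝⁿ`. -/
structure BidegreeForm (n k : ℕ) where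
  form : En n × En n → AlternatingMap ℝ (En n × En n) ℝ (Fin n)
  cont : ∀ v : Fin n → En n × En n, Continuous fun x => form x v
  vanish_fst : ∀ (x : En n × En n) (v : Fin n → En n × En n),
    n - k + 1 ≤ (Finset.univ.filter fun i => (v i).2 = 0).card → form x v = 0
  vanish_snd : ∀ (x : En n × En n) (v : Fin n → En n × En n),
    k + 1 ≤ (Finset.univ.filter fun i => (v i).1 = 0).card → form x v = 0

/-- The Hessian of `f` at `x`, applied to a vector `v`, obtained as the derivative of
the gradient map. -/
def hess {n : ℕ} (f : En n → ℝ) (x v : En n) : En n :=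
  fderiv ℝ (fun y => gradient f y) x v

/-- `τ` is a positive form: `G_f^* τ ≥ 0` for every convex `C²` function `f`, i.e.
`τ_{(x,∇f(x))}((e_1, D²f(x)e_1), …, (e_n, D²f(x)e_n)) ≥ 0` on the standard basis. -/
def IsPositiveForm {n k : ℕ} (τ : BidegreeForm n k) : Prop :=
  ∀ f : En n → ℝ, ConvexOn ℝ Set.univ f → ContDiff ℝ 2 f → ∀ x : En n,
    0 ≤ τ.form (x, gradient f x)
      (fun i => (EuclideanSpace.single i 1, hess f x (EuclideanSpace.single i 1)))

open Filter Topology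
open scoped RealInnerProductSpace

variable {n : ℕ} {f : En n → ℝ}

/-- toDual.symm as a real linear isometry equiv. -/
def tds (n : ℕ) : StrongDual ℝ (En n) ≃ₗᵢ[ℝ] En n :=
  (InnerProductSpace.toDual ℝ (En n)).symm

lemma tds_inner (ℓ : StrongDual ℝ (En n)) (w : En n) : ⟪tds n ℓ, w⟫ = ℓ w :=
  InnerProductSpace.toDual_symm_apply

lemma gradient_def (y : En n) : gradient f y = tds n (fderiv ℝ f y) := rfl

lemma hasFDerivAt_gradient (hf : ContDiff ℝ 2 f) (x : En n) :
    HasFDerivAt (fun y => gradient f y)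
      (((tds n).toContinuousLinearEquiv : _ →L[ℝ] En n).comp (fderiv ℝ (fderiv ℝ f) x)) x := by
  have h1 : ContDiff ℝ 1 (fderiv ℝ f) := hf.fderiv_right (le_refl _)
  have h2 : HasFDerivAt (fderiv ℝ f) (fderiv ℝ (fderiv ℝ f) x) x :=
    (h1.differentiable one_ne_zero x).hasFDerivAt
  exact (((tds n).toContinuousLinearEquiv : _ →L[ℝ] En n).hasFDerivAt).comp x h2

lemma inner_hess (hf : ContDiff ℝ 2 f) (x v w : En n) :
    ⟪hess f x v, w⟫ = fderiv ℝ (fderiv ℝ f) x v w := by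
  have := (hasFDerivAt_gradient hf x).fderiv
  rw [hess, this]
  exact tds_inner _ _

lemma inner_hess_symm (hf : ContDiff ℝ 2 f) (x v w : En n) :
    ⟪hess f x v, w⟫ = ⟪hess f x w, v⟫ := by
  rw [inner_hess hf, inner_hess hf]
  exact second_derivative_symmetric_of_eventually
    (Filter.Eventually.of_forall fun y => ((hf.differentiable (by norm_num)) y).hasFDerivAt)
    ((hf.fderiv_right (m := 1) (le_refl _)).differentiable one_ne_zero x).hasFDerivAt v w

lemma Monotone.nonneg_of_hasDerivAt {g : ℝ → ℝ} (hg : Monotone g) {d a : ℝ}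
    (h : HasDerivAt g d a) : 0 ≤ d := by
  have hle : 𝓝[Set.Ioi a] a ≤ 𝓝[≠] a :=
    nhdsWithin_mono a (fun x hx => (LT.lt.ne' hx : x ≠ a))
  have h' := (hasDerivAt_iff_tendsto_slope.1 h).mono_left hle
  refine _root_.ge_of_tendsto h' ?_
  filter_upwards [self_mem_nhdsWithin] with t ht
  have : (0:ℝ) ≤ (g t - g a) / (t - a) :=
    div_nonneg (sub_nonneg.2 (hg (le_of_lt ht))) (sub_nonneg.2 (le_of_lt ht))
  simpa [slope_def_field, div_eq_inv_mul] using this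

lemma inner_hess_nonneg (hconv : ConvexOn ℝ Set.univ f) (hf : ContDiff ℝ 2 f) (x v : En n) :
    0 ≤ ⟪hess f x v, v⟫ := by
  rw [inner_hess hf]
  have hdiff : Differentiable ℝ f := hf.differentiable (by norm_num)
  set c : ℝ → En n := fun t => t • v + x with hcdef
  have hc : ∀ t, HasDerivAt c v t := by
    intro t
    simpa [hcdef] using ((hasDerivAt_id t).smul_const v).add_const x
  set g : ℝ → ℝ := fun t => fderiv ℝ f (c t) v with hgdef
  have hφ : ∀ t, HasDerivAt (fun s => f (c s)) (g t) t := fun t =>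
    ((hdiff (c t)).hasFDerivAt).comp_hasDerivAt t (hc t)
  have hφconv : ConvexOn ℝ Set.univ fun s => f (c s) := by
    have h := hconv.comp_affineMap (AffineMap.lineMap x (x + v) : ℝ →ᵃ[ℝ] En n)
    have : ((AffineMap.lineMap x (x + v) : ℝ →ᵃ[ℝ] En n) ⁻¹' Set.univ) = Set.univ := by simp
    rw [this] at h
    have hfun : (fun s => f (c s)) = f ∘ ⇑(AffineMap.lineMap x (x + v) : ℝ →ᵃ[ℝ] En n) := by
      funext s
      simp [Function.comp, AffineMap.lineMap_apply, hcdef]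
    rw [hfun]; exact h
  have hgmono : Monotone g := by
    have hd : ∀ t ∈ Set.univ, DifferentiableAt ℝ (fun s => f (c s)) t :=
      fun t _ => (hφ t).differentiableAt
    have h := hφconv.monotoneOn_deriv hd
    have hderiv : deriv (fun s => f (c s)) = g := funext fun t => (hφ t).deriv
    rw [hderiv] at h
    exact monotoneOn_univ.1 h
  have hD1 : HasFDerivAt (fderiv ℝ f) (fderiv ℝ (fderiv ℝ f) x) x :=
    ((hf.fderiv_right (m := 1) (le_refl _)).differentiable one_ne_zero x).hasFDerivAt
  have h2 : HasFDerivAt (fun y => fderiv ℝ f y v)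
      ((ContinuousLinearMap.apply ℝ ℝ v).comp (fderiv ℝ (fderiv ℝ f) x)) x :=
    ((ContinuousLinearMap.apply ℝ ℝ v).hasFDerivAt).comp x hD1
  have hc0 : c 0 = x := by simp [hcdef]
  have h3 : HasDerivAt g (fderiv ℝ (fderiv ℝ f) x v v) 0 := by
    have h2' : HasFDerivAt (fun y => fderiv ℝ f y v)
        ((ContinuousLinearMap.apply ℝ ℝ v).comp (fderiv ℝ (fderiv ℝ f) x)) (c 0) := by
      rw [hc0]; exact h2
    simpa [Function.comp_def] using h2'.comp_hasDerivAt 0 (hc 0)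
  exact hgmono.nonneg_of_hasDerivAt h3

section Quad
variable {n : ℕ} (A : En n →L[ℝ] En n) (x ξ : En n)
  (hsymm : ∀ v w : En n, ⟪A v, w⟫ = ⟪v, A w⟫)

/-- The quadratic test function. -/
def quadf : En n → ℝ := fun y => ⟪ξ, y⟫ + (1/2 : ℝ) * ⟪A (y - x), y - x⟫

lemma quadf_contDiff : ContDiff ℝ 2 (quadf A x ξ) := by
  apply ContDiff.add
  · exact (contDiff_const.inner ℝ contDiff_id)
  · exact contDiff_const.mul
      ((A.contDiff.comp (contDiff_id.sub contDiff_const)).inner ℝ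
        (contDiff_id.sub contDiff_const))

lemma quadf_hasGradient (hsymm : ∀ v w : En n, ⟪A v, w⟫ = ⟪v, A w⟫) (y : En n) :
    HasGradientAt (quadf A x ξ) (ξ + A (y - x)) y := by
  rw [hasGradientAt_iff_hasFDerivAt]
  have h1 : HasFDerivAt (fun y : En n => ⟪ξ, y⟫)
      ((fderivInnerCLM ℝ (ξ, y)).comp ((0 : En n →L[ℝ] En n).prod (ContinuousLinearMap.id ℝ (En n)))) y :=
    (hasFDerivAt_const ξ y).inner ℝ (hasFDerivAt_id y)
  have h2 : HasFDerivAt (fun y : En n => ⟪A (y - x), y - x⟫)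
      ((fderivInnerCLM ℝ (A (y - x), y - x)).comp
        ((A.comp (ContinuousLinearMap.id ℝ (En n))).prod (ContinuousLinearMap.id ℝ (En n)))) y := by
    have hy : HasFDerivAt (fun y : En n => y - x) (ContinuousLinearMap.id ℝ (En n)) y :=
      (hasFDerivAt_id y).sub_const x
    exact (A.hasFDerivAt.comp y hy).inner ℝ hy
  have := h1.add (h2.const_mul (1/2 : ℝ))
  apply this.congr_fderiv
  apply ContinuousLinearMap.ext
  intro w
  simp only [ContinuousLinearMap.add_apply, ContinuousLinearMap.coe_comp', Function.comp_apply,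
    ContinuousLinearMap.smul_apply, ContinuousLinearMap.prod_apply, fderivInnerCLM_apply,
    ContinuousLinearMap.zero_apply, ContinuousLinearMap.coe_id', id_eq,
    InnerProductSpace.toDual_apply_apply, smul_eq_mul]
  have hs : ⟪A w, y - x⟫ = ⟪A (y - x), w⟫ := by
    rw [hsymm]; exact real_inner_comm _ _
  rw [hs, inner_zero_left, inner_add_left]
  ring

lemma quadf_gradient (hsymm : ∀ v w : En n, ⟪A v, w⟫ = ⟪v, A w⟫) :
    gradient (quadf A x ξ) = fun y => ξ + A (y - x) :=
  gradient_eq fun y => quadf_hasGradient A x ξ hsymm y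

lemma quadf_hess (hsymm : ∀ v w : En n, ⟪A v, w⟫ = ⟪v, A w⟫) (v : En n) :
    hess (quadf A x ξ) x v = A v := by
  have hfun : (fun y => gradient (quadf A x ξ) y) = fun y => A y + (ξ - A x) := by
    funext y
    have := congrFun (quadf_gradient A x ξ hsymm) y
    rw [this, map_sub]
    abel
  have hA : HasFDerivAt (fun y : En n => A y + (ξ - A x)) A x :=
    A.hasFDerivAt.add_const (ξ - A x)
  rw [hess, hfun, hA.fderiv]

lemma quadf_gradient_at (hsymm : ∀ v w : En n, ⟪A v, w⟫ = ⟪v, A w⟫) :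
    gradient (quadf A x ξ) x = ξ := by
  rw [congrFun (quadf_gradient A x ξ hsymm) x]
  simp

lemma quadf_convex (hsymm : ∀ v w : En n, ⟪A v, w⟫ = ⟪v, A w⟫)
    (hpsd : ∀ v : En n, 0 ≤ ⟪A v, v⟫) : ConvexOn ℝ Set.univ (quadf A x ξ) := by
  refine ⟨convex_univ, fun y _ z _ a b ha hb hab => ?_⟩
  unfold quadf
  have hexp : ∀ u1 u2 : En n, ⟪A (u1 + u2), u1 + u2⟫
      = ⟪A u1, u1⟫ + 2 * ⟪A u1, u2⟫ + ⟪A u2, u2⟫ := by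
    intro u1 u2
    have h21 : ⟪A u2, u1⟫ = ⟪A u1, u2⟫ := by rw [hsymm]; exact real_inner_comm _ _
    rw [map_add, inner_add_left, inner_add_right, inner_add_right, h21]
    ring
  set u1 := y - x with hu1
  set u2 := z - x with hu2
  have hkey : a • y + b • z - x = a • u1 + b • u2 := by
    have h' : a • u1 + b • u2 = a • y + b • z - (a + b) • x := by
      rw [hu1, hu2]; module
    rw [h', hab, one_smul]
  have hsm : ∀ (c d : ℝ) (u w : En n), ⟪A (c • u), d • w⟫ = c * d * ⟪A u, w⟫ := by
    intro c d u w
    rw [map_smul, real_inner_smul_left, real_inner_smul_right]; ring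
  have h1 : ⟪A (a • u1 + b • u2), a • u1 + b • u2⟫
      = a^2 * ⟪A u1, u1⟫ + 2 * (a*b) * ⟪A u1, u2⟫ + b^2 * ⟪A u2, u2⟫ := by
    rw [hexp, hsm, hsm, hsm]
    ring
  have h2 : 0 ≤ ⟪A (u1 - u2), u1 - u2⟫ := hpsd _
  have h3 : ⟪A (u1 - u2), u1 - u2⟫ = ⟪A u1, u1⟫ - 2 * ⟪A u1, u2⟫ + ⟪A u2, u2⟫ := by
    have := hexp u1 (-u2)
    simpa [inner_neg_left, inner_neg_right, sub_eq_add_neg] using this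
  rw [inner_add_right, real_inner_smul_right, real_inner_smul_right, hkey, h1]
  have hS : 0 ≤ ⟪A u1, u1⟫ - 2 * ⟪A u1, u2⟫ + ⟪A u2, u2⟫ := h3 ▸ h2
  have hQ : a^2 * ⟪A u1, u1⟫ + 2 * (a*b) * ⟪A u1, u2⟫ + b^2 * ⟪A u2, u2⟫
      ≤ a * ⟪A u1, u1⟫ + b * ⟪A u2, u2⟫ := by
    have hb2 : b = 1 - a := by linarith
    subst hb2
    nlinarith [mul_nonneg (mul_nonneg ha hb) hS]
  simp only [smul_eq_mul]
  linarith [hQ]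
end Quad

section Alg
variable {n k : ℕ}

lemma basis_change (g : (En n × En n) [⋀^Fin n]→ₗ[ℝ] ℝ) (L : En n →ₗ[ℝ] (En n × En n))
    (e : Fin n → En n) :
    g (fun i => L (e i)) = (Matrix.det (Matrix.of fun i j => e j i)) *
      g (fun i => L (EuclideanSpace.single i 1)) := by
  classical
  set b := (EuclideanSpace.basisFun (Fin n) ℝ).toBasis with hbdef
  have hb : ∀ i, b i = EuclideanSpace.single i 1 := fun i => by
    rw [hbdef, OrthonormalBasis.coe_toBasis, EuclideanSpace.basisFun_apply]
  set g' := g.compLinearMap L with hg'def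
  have h := g'.eq_smul_basis_det b
  have h1 : g' e = g' ⇑b * b.det e := by
    conv_lhs => rw [h]
    rw [AlternatingMap.smul_apply, smul_eq_mul]
  have h2 : b.det e = Matrix.det (Matrix.of fun i j => e j i) := by
    rw [Module.Basis.det_apply]
    congr 1
  have h3 : g' ⇑b = g (fun i => L (EuclideanSpace.single i 1)) := by
    rw [hg'def, AlternatingMap.compLinearMap_apply]
    congr 1
    funext i
    rw [hb]
  have h4 : g' e = g (fun i => L (e i)) := by
    rw [hg'def, AlternatingMap.compLinearMap_apply]
  rw [← h4, h1, h2, h3]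
  ring

lemma orthonormal_det_sq (e : Fin n → En n) (he : Orthonormal ℝ e) :
    Matrix.det (Matrix.of fun i j => e j i) * Matrix.det (Matrix.of fun i j => e j i) = 1 := by
  classical
  set M : Matrix (Fin n) (Fin n) ℝ := Matrix.of fun i j => e j i with hM
  have hMtM : M.transpose * M = 1 := by
    ext i j
    rw [Matrix.mul_apply]
    have : ∀ l, M.transpose i l * M l j = e i l * e j l := fun l => by
      simp [hM, Matrix.transpose_apply, Matrix.of_apply]
    simp_rw [this]
    have hinner : ⟪e i, e j⟫ = ∑ l, e i l * e j l := by
      rw [PiLp.inner_apply]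
      simp [RCLike.inner_apply, conj_trivial]
      exact Finset.sum_congr rfl fun _ _ => mul_comm _ _
    rw [← hinner]
    rcases eq_or_ne i j with rfl | hij
    · rw [orthonormal_iff_ite.1 he i i]; simp
    · rw [orthonormal_iff_ite.1 he i j]; simp [hij, Matrix.one_apply]
  have := congrArg Matrix.det hMtM
  rwa [Matrix.det_mul, Matrix.det_transpose, Matrix.det_one] at this

lemma exists_perm_finset (hk : k ≤ n) (s : Finset (Fin n)) (hs : s.card = k) :
    ∃ σ : Equiv.Perm (Fin n), ∀ i : Fin n, σ i ∈ s ↔ ¬((i : ℕ) < n - k) := by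
  classical
  have hnk : n = (n - k) + k := by omega
  have hcard1 : Fintype.card {x : Fin n // ¬ x ∈ s} = n - k := by
    rw [Fintype.card_subtype_compl]
    simp [hs, Fintype.card_coe]
  have hcard2 : Fintype.card {x : Fin n // x ∈ s} = k := by
    simp [Fintype.card_coe, hs]
  let u1 : Fin (n - k) ≃ {x : Fin n // ¬ x ∈ s} := (Fintype.equivFinOfCardEq hcard1).symm
  let u2 : Fin k ≃ {x : Fin n // x ∈ s} := (Fintype.equivFinOfCardEq hcard2).symm
  let σ : Equiv.Perm (Fin n) :=
    ((finCongr hnk).trans finSumFinEquiv.symm).trans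
      ((u1.sumCongr u2).trans ((Equiv.sumComm _ _).trans (Equiv.sumCompl (· ∈ s))))
  refine ⟨σ, fun i => ?_⟩
  by_cases h : (i : ℕ) < n - k
  · have h1 : (finCongr hnk) i = Fin.castAdd k ⟨(i : ℕ), h⟩ := by
      ext; simp
    have : σ i = ↑(u1 ⟨(i : ℕ), h⟩) := by
      show ((u1.sumCongr u2).trans ((Equiv.sumComm _ _).trans (Equiv.sumCompl (· ∈ s))))
        (finSumFinEquiv.symm ((finCongr hnk) i)) = _
      rw [h1, finSumFinEquiv_symm_apply_castAdd]
      simp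
    rw [this]
    simpa [h] using (u1 ⟨(i : ℕ), h⟩).2
  · have h' : n - k ≤ (i : ℕ) := le_of_not_gt h
    have h2 : (i : ℕ) - (n - k) < k := by
      have := i.2; omega
    have h1 : (finCongr hnk) i = Fin.natAdd (n - k) ⟨(i : ℕ) - (n - k), h2⟩ := by
      ext; simp; omega
    have : σ i = ↑(u2 ⟨(i : ℕ) - (n - k), h2⟩) := by
      show ((u1.sumCongr u2).trans ((Equiv.sumComm _ _).trans (Equiv.sumCompl (· ∈ s))))
        (finSumFinEquiv.symm ((finCongr hnk) i)) = _
      rw [h1, finSumFinEquiv_symm_apply_natAdd]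
      simp
    rw [this]
    simpa [h] using (u2 ⟨(i : ℕ) - (n - k), h2⟩).2
end Alg

namespace Work
variable {n k : ℕ} (τ : BidegreeForm n k)

/-- The frame attached to a family `e` and a subset `s`. -/
def frameW (e : Fin n → En n) (s : Finset (Fin n)) : Fin n → En n × En n :=
  fun i => if i ∈ s then ((0 : En n), e i) else (e i, (0 : En n))

lemma frameW_vanish (hk : k ≤ n) (p : En n × En n) (e : Fin n → En n)
    (he : ∀ i, e i ≠ 0) (s : Finset (Fin n)) (hs : s.card ≠ k) :
    τ.form p (frameW e s) = 0 := by
  classical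
  have hsn : s.card ≤ n := by simpa using Finset.card_le_card (Finset.subset_univ s)
  rcases lt_or_gt_of_ne hs with hlt | hgt
  · apply τ.vanish_fst
    have hfilter : (Finset.univ.filter fun i => (frameW e s i).2 = 0) = sᶜ := by
      ext i
      by_cases hi : i ∈ s <;> rw [Finset.mem_filter] <;> simp [frameW, hi, he i]
    rw [hfilter, Finset.card_compl]
    simp only [Fintype.card_fin]
    omega
  · apply τ.vanish_snd
    have hfilter : (Finset.univ.filter fun i => (frameW e s i).1 = 0) = s := by
      ext i
      by_cases hi : i ∈ s <;> rw [Finset.mem_filter] <;> simp [frameW, hi, he i]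
    rw [hfilter]
    omega

lemma expand (p : En n × En n) (e : Fin n → En n) (l : Fin n → ℝ) :
    τ.form p (fun i => (e i, l i • e i)) =
      ∑ s : Finset (Fin n), (∏ i ∈ s, l i) * τ.form p (frameW e s) := by
  classical
  have hsplit : (fun i => ((e i, l i • e i) : En n × En n)) =
      (fun i => ((0 : En n), l i • e i)) + (fun i => (e i, (0 : En n))) := by
    funext i
    simp [Prod.ext_iff]
  rw [hsplit]
  have hcoe : (τ.form p) ((fun i => ((0 : En n), l i • e i)) + fun i => (e i, (0 : En n)))
      = (τ.form p).toMultilinearMap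
        ((fun i => ((0 : En n), l i • e i)) + fun i => (e i, (0 : En n))) := rfl
  rw [hcoe, MultilinearMap.map_add_univ]
  apply Finset.sum_congr rfl
  intro s _
  have hpw : (s.piecewise (fun i => ((0 : En n), l i • e i)) (fun i => (e i, (0 : En n))))
      = fun i => (s.piecewise l (fun _ => 1) i) • frameW e s i := by
    funext i
    by_cases hi : i ∈ s <;>
      simp [Finset.piecewise, hi, frameW, Prod.smul_mk, smul_zero]
  rw [hpw, MultilinearMap.map_smul_univ]
  rw [smul_eq_mul]
  congr 1
  rw [Finset.prod_piecewise]
  simp [Finset.univ_inter]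
end Work

namespace Work
variable {n k : ℕ} (τ : BidegreeForm n k)

lemma signed_RHS (hn : 1 ≤ n)
    (hRHS : ∀ (x ξ : En n) (e : Fin n → En n), Orthonormal ℝ e →
        Matrix.det (Matrix.of fun i j => e j i) = 1 →
        0 ≤ τ.form (x, ξ)
          (fun i : Fin n => if (i : ℕ) < n - k then ((e i, 0) : En n × En n) else (0, e i)))
    (x ξ : En n) (e : Fin n → En n) (he : Orthonormal ℝ e) :
    0 ≤ Matrix.det (Matrix.of fun i j => e j i) *
      τ.form (x, ξ)
        (fun i : Fin n => if (i : ℕ) < n - k then ((e i, 0) : En n × En n) else (0, e i)) := by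
  classical
  have hdet2 := orthonormal_det_sq e he
  rcases mul_self_eq_one_iff.1 hdet2 with h1 | h1
  · rw [h1, one_mul]; exact hRHS x ξ e he h1
  · set j0 : Fin n := ⟨0, hn⟩ with hj0
    set c : Fin n → ℝ := fun i => if i = j0 then (-1 : ℝ) else 1 with hc
    have hcsq : ∀ i, c i * c i = 1 := fun i => by
      by_cases h : i = j0 <;> simp [hc, h]
    set e' : Fin n → En n := fun i : Fin n => c i • e i with he'def
    have he' : Orthonormal ℝ e' := by
      rw [orthonormal_iff_ite] at he ⊢
      intro i j
      rw [he'def]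
      simp only [real_inner_smul_left, real_inner_smul_right]
      rw [he i j]
      rcases eq_or_ne i j with rfl | hij
      · simp [hcsq i]
      · simp [hij]
    have hM' : (Matrix.of fun i j => e' j i)
        = (Matrix.of fun i j => e j i).updateCol j0 ((-1 : ℝ) • fun i => e j0 i) := by
      ext i j
      rw [Matrix.updateCol_apply]
      by_cases h : j = j0 <;> simp [he'def, hc, h]
    have hdet' : Matrix.det (Matrix.of fun i j => e' j i) = 1 := by
      rw [hM', Matrix.det_updateCol_smul]
      rw [show ((Matrix.of fun i j => e j i).updateCol j0 fun i => e j0 i)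
          = Matrix.of fun i j => e j i from Matrix.updateCol_eq_self _ _, h1]
      norm_num
    have hF : (fun i : Fin n => if (i : ℕ) < n - k then ((e' i, 0) : En n × En n) else (0, e' i))
        = fun i : Fin n => c i •
          (if (i : ℕ) < n - k then ((e i, 0) : En n × En n) else (0, e i)) := by
      funext i
      by_cases h : (i : ℕ) < n - k <;> simp [he'def, h, Prod.smul_mk]
    have h0 := hRHS x ξ e' he' hdet'
    rw [hF] at h0
    have hms : τ.form (x, ξ) (fun i : Fin n => c i •
          (if (i : ℕ) < n - k then ((e i, 0) : En n × En n) else (0, e i)))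
        = (∏ i, c i) • τ.form (x, ξ)
          (fun i : Fin n => if (i : ℕ) < n - k then ((e i, 0) : En n × En n) else (0, e i)) :=
      MultilinearMap.map_smul_univ (τ.form (x, ξ)).toMultilinearMap c _
    have hprod : (∏ i, c i) = -1 := by
      rw [hc]
      rw [Finset.prod_ite_eq' Finset.univ j0 (fun _ => (-1 : ℝ))]
      simp
    rw [hms, hprod] at h0
    rw [h1]
    simpa using h0

lemma signed_frameW (hn : 1 ≤ n) (hk : k ≤ n)
    (hRHS : ∀ (x ξ : En n) (e : Fin n → En n), Orthonormal ℝ e →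
        Matrix.det (Matrix.of fun i j => e j i) = 1 →
        0 ≤ τ.form (x, ξ)
          (fun i : Fin n => if (i : ℕ) < n - k then ((e i, 0) : En n × En n) else (0, e i)))
    (x ξ : En n) (e : Fin n → En n) (he : Orthonormal ℝ e)
    (s : Finset (Fin n)) (hs : s.card = k) :
    0 ≤ Matrix.det (Matrix.of fun i j => e j i) * τ.form (x, ξ) (frameW e s) := by
  classical
  obtain ⟨σ, hσ⟩ := exists_perm_finset hk s hs
  set e' : Fin n → En n := e ∘ σ with he'def
  have he' : Orthonormal ℝ e' := he.comp σ σ.injective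
  have hF : (fun i : Fin n => if (i : ℕ) < n - k then ((e' i, 0) : En n × En n) else (0, e' i))
      = frameW e s ∘ σ := by
    funext i
    by_cases h : (i : ℕ) < n - k
    · have : ¬ (σ i ∈ s) := fun hmem => (hσ i).1 hmem h
      simp [he'def, h, frameW, this]
    · have : σ i ∈ s := (hσ i).2 h
      simp [he'def, h, frameW, this]
  have hτ : τ.form (x, ξ) (frameW e s ∘ σ)
      = Equiv.Perm.sign σ • τ.form (x, ξ) (frameW e s) :=
    AlternatingMap.map_perm (τ.form (x, ξ)) (frameW e s) σ
  have hMsub : (Matrix.of fun i j => e' j i)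
      = (Matrix.of fun i j => e j i).submatrix id σ := by
    ext i j; rfl
  have hdet' : Matrix.det (Matrix.of fun i j => e' j i)
      = Equiv.Perm.sign σ * Matrix.det (Matrix.of fun i j => e j i) := by
    rw [hMsub, Matrix.det_permute']
  have h0 := signed_RHS τ hn hRHS x ξ e' he'
  rw [hF, hτ, hdet'] at h0
  rcases Int.units_eq_one_or (Equiv.Perm.sign σ) with hsgn | hsgn <;>
    · rw [hsgn] at h0
      simpa using h0

end Work

namespace Work
variable {n k : ℕ} (τ : BidegreeForm n k)

lemma card_filter_coe_lt {n m : ℕ} (hm : m ≤ n) :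
    (Finset.univ.filter fun i : Fin n => (i : ℕ) < m).card = m := by
  classical
  rw [← Fintype.card_subtype]
  have := Fintype.card_of_bijective
    (f := fun x : {i : Fin n // (i : ℕ) < m} => (⟨(x.1 : ℕ), x.2⟩ : Fin m))
    ⟨fun a b hab => by
      ext
      simpa [Fin.ext_iff] using hab,
     fun j => ⟨⟨⟨(j : ℕ), lt_of_lt_of_le j.2 hm⟩, j.2⟩, rfl⟩⟩
  rwa [Fintype.card_fin] at this


end Work

open Work

/-- A form of bidegree `(n-k,k)` is positive iff for every point
`(x,ξ)` and every positively oriented orthonormal basis `e_1,…,e_n` of `ℝⁿ` one has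
`τ_{(x,ξ)}((e_1,0),…,(e_{n-k},0),(0,e_{n-k+1}),…,(0,e_n)) ≥ 0`. -/
theorem stmt17 (n k : ℕ) (hn : 1 ≤ n) (hk : k ≤ n) (τ : BidegreeForm n k) :
    IsPositiveForm τ ↔
      ∀ (x ξ : En n) (e : Fin n → En n), Orthonormal ℝ e →
        Matrix.det (Matrix.of fun i j => e j i) = 1 →
        0 ≤ τ.form (x, ξ)
          (fun i => if (i : ℕ) < n - k then ((e i, 0) : En n × En n) else (0, e i)) := by
  classical
  constructor
  · -- positive → frame condition
    intro hpos x ξ e he hdet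
    set S : Finset (Fin n) := Finset.univ.filter fun i : Fin n => ¬ ((i : ℕ) < n - k) with hS
    have hScard : S.card = k := by
      have h1 := Finset.card_filter_add_card_filter_not
        (s := (Finset.univ : Finset (Fin n))) (p := fun i : Fin n => (i : ℕ) < n - k)
      rw [card_filter_coe_lt (Nat.sub_le n k)] at h1
      simp only [Finset.card_univ, Fintype.card_fin] at h1
      rw [hS]
      omega
    set A : En n →L[ℝ] En n :=
      ∑ i ∈ S, (innerSL ℝ (e i)).smulRight (e i) with hA
    have hAapply : ∀ y, A y = ∑ i ∈ S, ⟪e i, y⟫ • e i := by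
      intro y
      rw [hA]
      simp [ContinuousLinearMap.sum_apply]
    have hsymm : ∀ v w : En n, ⟪A v, w⟫ = ⟪v, A w⟫ := by
      intro v w
      rw [hAapply, hAapply, sum_inner, inner_sum]
      apply Finset.sum_congr rfl
      intro i _
      rw [real_inner_smul_left, real_inner_smul_right]
      rw [real_inner_comm (e i) v]
      ring
    have hpsd : ∀ v : En n, 0 ≤ ⟪A v, v⟫ := by
      intro v
      rw [hAapply, sum_inner]
      apply Finset.sum_nonneg
      intro i _
      rw [real_inner_smul_left, real_inner_comm]
      exact mul_self_nonneg _
    set l : Fin n → ℝ := fun i => if (i : ℕ) < n - k then 0 else 1 with hl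
    have hAe : ∀ j, A (e j) = l j • e j := by
      intro j
      rw [hAapply]
      have : ∀ i ∈ S, ⟪e i, e j⟫ • e i = if i = j then e i else 0 := by
        intro i _
        rw [orthonormal_iff_ite.1 he]
        by_cases h : i = j <;> simp [h]
      rw [Finset.sum_congr rfl this, Finset.sum_ite_eq' S j (fun i => e i)]
      by_cases h : (j : ℕ) < n - k
      · have hmem : j ∉ S := by simp [hS]; omega
        simp [hmem, hl, h]
      · have hmem : j ∈ S := by simp [hS]; omega
        simp [hmem, hl, h]
    have h0 := hpos (quadf A x ξ) (quadf_convex A x ξ hsymm hpsd) (quadf_contDiff A x ξ) x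
    rw [quadf_gradient_at A x ξ hsymm] at h0
    have hhess : ∀ v, hess (quadf A x ξ) x v = A v := quadf_hess A x ξ hsymm
    simp only [hhess] at h0
    -- change of basis
    set L : En n →ₗ[ℝ] En n × En n := LinearMap.prod LinearMap.id A.toLinearMap with hL
    have hbc := basis_change (τ.form (x, ξ)) L e
    rw [hdet, one_mul] at hbc
    have hframe1 : (fun i : Fin n => L (EuclideanSpace.single i 1))
        = fun i : Fin n => ((EuclideanSpace.single i 1 : En n),
            A (EuclideanSpace.single i 1)) := rfl
    have hframe2 : (fun i : Fin n => L (e i)) = fun i : Fin n => (e i, l i • e i) := by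
      funext i
      show (e i, A (e i)) = _
      rw [hAe i]
    rw [hframe1, hframe2] at hbc
    rw [← hbc] at h0
    rw [expand τ (x, ξ) e l] at h0
    have hsum : ∑ s : Finset (Fin n), (∏ i ∈ s, l i) * τ.form (x, ξ) (frameW e s)
        = τ.form (x, ξ) (frameW e S) := by
      rw [Finset.sum_eq_single S]
      · have : ∀ i ∈ S, l i = 1 := by
          intro i hi
          have : ¬ ((i : ℕ) < n - k) := by simpa [hS] using hi
          simp [hl, this]
        rw [Finset.prod_congr rfl this]
        simp
      · intro s _ hsne
        by_cases hcard : s.card = k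
        · have : ∃ i ∈ s, ¬ i ∈ S := by
            by_contra hcon
            push_neg at hcon
            exact hsne (Finset.eq_of_subset_of_card_le hcon (by omega))
          obtain ⟨i, his, hiS⟩ := this
          have hli : l i = 0 := by
            have hlt : (i : ℕ) < n - k := by
              by_contra hcon
              exact hiS (by simp [hS]; omega)
            simp [hl, hlt]
          rw [Finset.prod_eq_zero his hli, zero_mul]
        · rw [frameW_vanish τ hk (x, ξ) e (fun i => he.ne_zero i) s hcard, mul_zero]
      · intro h; exact absurd (Finset.mem_univ S) h
    rw [hsum] at h0
    have hframe3 : frameW e S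
        = fun i : Fin n => if (i : ℕ) < n - k then ((e i, 0) : En n × En n) else (0, e i) := by
      funext i
      by_cases h : (i : ℕ) < n - k
      · have hmem : i ∉ S := by simp [hS]; omega
        simp [frameW, hmem, h]
      · have hmem : i ∈ S := by simp [hS]; omega
        simp [frameW, hmem, h]
    rwa [hframe3] at h0
  · -- frame condition → positive
    intro hRHS f hconv hf x
    set A : En n →L[ℝ] En n := fderiv ℝ (fun y => gradient f y) x with hA
    have hhess : ∀ v, hess f x v = A v := fun v => rfl
    have hsymm : ∀ v w : En n, ⟪A v, w⟫ = ⟪v, A w⟫ := by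
      intro v w
      rw [← hhess v, ← hhess w, inner_hess_symm hf, real_inner_comm]
    have hpsd : ∀ v : En n, 0 ≤ ⟪A v, v⟫ := by
      intro v
      rw [← hhess v]
      exact inner_hess_nonneg hconv hf x v
    set T : En n →ₗ[ℝ] En n := A.toLinearMap with hT
    have hTsymm : T.IsSymmetric := fun v w => hsymm v w
    have hrank : Module.finrank ℝ (En n) = n := finrank_euclideanSpace_fin
    set b := hTsymm.eigenvectorBasis hrank with hb
    set μ := hTsymm.eigenvalues hrank with hμdef
    have hborth : Orthonormal ℝ ⇑b := b.orthonormal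
    have heig : ∀ i, A (b i) = μ i • b i := fun i =>
      (hTsymm.hasEigenvector_eigenvectorBasis hrank i).apply_eq_smul
    have hμ : ∀ i, 0 ≤ μ i := by
      intro i
      have h := hpsd (b i)
      rw [heig i, real_inner_smul_left] at h
      have hnorm : ⟪(b i : En n), b i⟫ = 1 := by
        rw [orthonormal_iff_ite.1 hborth]; simp
      rw [hnorm, mul_one] at h
      exact h
    set p : En n × En n := (x, gradient f x) with hp
    set L : En n →ₗ[ℝ] En n × En n := LinearMap.prod LinearMap.id T with hL
    have hgoal : (fun i : Fin n => ((EuclideanSpace.single i 1 : En n),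
        hess f x (EuclideanSpace.single i 1)))
        = fun i : Fin n => L (EuclideanSpace.single i 1) := rfl
    rw [hgoal]
    have hbc := basis_change (τ.form p) L ⇑b
    set D : ℝ := Matrix.det (Matrix.of fun i j => b j i) with hD
    have hD2 : D * D = 1 := orthonormal_det_sq ⇑b hborth
    have hLb : (fun i : Fin n => L (b i)) = fun i : Fin n => ((b i : En n), μ i • b i) := by
      funext i
      show ((b i : En n), A (b i)) = _
      rw [heig i]
    rw [hLb] at hbc
    have key : τ.form p (fun i : Fin n => L (EuclideanSpace.single i 1))
        = D * τ.form p (fun i : Fin n => ((b i : En n), μ i • b i)) := by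
      have := congrArg (fun r => D * r) hbc
      rw [← mul_assoc, hD2, one_mul] at this
      exact this.symm
    rw [key, expand τ p ⇑b μ, Finset.mul_sum]
    apply Finset.sum_nonneg
    intro s _
    by_cases hcard : s.card = k
    · have h1 := signed_frameW τ hn hk hRHS x (gradient f x) ⇑b hborth s hcard
      rw [← hp, ← hD] at h1
      have h2 : 0 ≤ ∏ i ∈ s, μ i := Finset.prod_nonneg fun i _ => hμ i
      calc (0:ℝ) = (∏ i ∈ s, μ i) * 0 := by ring
        _ ≤ (∏ i ∈ s, μ i) * (D * τ.form p (frameW ⇑b s)) := by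
            apply mul_le_mul_of_nonneg_left h1 h2
        _ = D * ((∏ i ∈ s, μ i) * τ.form p (frameW ⇑b s)) := by ring
    · rw [frameW_vanish τ hk p ⇑b (fun i => hborth.ne_zero i) s hcard]
      simp
end
end

section
/- Let n ≥ 1 and 0 ≤ k ≤ n be integers and l > 0 a real number. Let ω be a form of bidegree (n−k, k) on ℝ^n × ℝ^n that is invariant under translations in the second factor (ω_{(x,ξ)} = ω_{(x,ξ′)} for all x, ξ, ξ′) and homogeneous of degree l in the first factor (ω_{(tx,ξ)} = t^l ω_{(x,ξ)} for all t > 0 and all (x,ξ)). Then there exists a constant C ≥ 0 such that for every convex function f : ℝ^n → ℝ of class C² and every x ∈ ℝ^n, |ω_{(x, ∇f(x))}((e_1, D²f(x)e_1), …, (e_n, D²f(x)e_n))| ≤ C · |x|^l · e_k(λ_1(x), …, λ_n(x)), where e_1,…,e_n is the standard basis of ℝ^n, λ_1(x),…,λ_n(x) are the eigenvalues of the Hessian D²f(x) (with multiplicity), and e_k denotes the k-th elementary symmetric polynomial. -/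
/-!
Statement 18: a form of bidegree `(n-k,k)` which is translation invariant in the
second factor and homogeneous of degree `l > 0` in the first factor satisfies
`|ω_{(x,∇f(x))}((e_i, D²f(x)e_i)_i)| ≤ C |x|^l e_k(λ_1(x),…,λ_n(x))` for all convex
`C²` functions `f`, where the `λ_i(x)` are the eigenvalues of the Hessian.
-/

noncomputable section

open scoped Classical

/-- The `k`-th elementary symmetric polynomial in `n` variables. -/
def esymm (n k : ℕ) (lam : Fin n → ℝ) : ℝ :=
  ∑ s ∈ Finset.powersetCard k (Finset.univ : Finset (Fin n)), ∏ i ∈ s, lam i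

namespace Stmt18Aux

open Finset
open scoped RealInnerProductSpace

variable {n : ℕ}

/-- basis vectors of `En n × En n`. -/
def cvec (n : ℕ) : Fin n ⊕ Fin n → En n × En n :=
  Sum.elim (fun j => (EuclideanSpace.single j 1, 0)) (fun j => (0, EuclideanSpace.single j 1))

/-- coordinate functionals. -/
def coef (n : ℕ) : Fin n ⊕ Fin n → En n × En n → ℝ :=
  Sum.elim (fun j p => ⟪EuclideanSpace.single j (1:ℝ), p.1⟫)
    (fun j p => ⟪EuclideanSpace.single j (1:ℝ), p.2⟫)

lemma sum_single (w : En n) :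
    ∑ j : Fin n, w j • EuclideanSpace.single j (1:ℝ) = w := by
  have h := (EuclideanSpace.basisFun (Fin n) ℝ).sum_repr' w
  simpa [EuclideanSpace.basisFun_apply, EuclideanSpace.inner_single_left] using h

lemma repr_eq (p : En n × En n) : (∑ j, coef n j p • cvec n j) = p := by
  rw [Fintype.sum_sum_type]
  simp only [coef, cvec, Sum.elim_inl, Sum.elim_inr, Prod.smul_mk, smul_zero]
  apply Prod.ext
  · simp only [Prod.fst_add, Prod.fst_sum]
    simp [EuclideanSpace.inner_single_left, sum_single]
  · simp only [Prod.snd_add, Prod.snd_sum]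
    simp [EuclideanSpace.inner_single_left, sum_single]

lemma coef_abs_le (j : Fin n ⊕ Fin n) (p : En n × En n) : |coef n j p| ≤ ‖p‖ := by
  have h1 : ‖EuclideanSpace.single (𝕜 := ℝ) (j.elim id id) (1:ℝ)‖ = 1 := by
    rw [EuclideanSpace.norm_single]; simp
  cases j with
  | inl j =>
    calc |coef n (Sum.inl j) p| ≤ ‖EuclideanSpace.single (𝕜 := ℝ) j (1:ℝ)‖ * ‖p.1‖ :=
          abs_real_inner_le_norm _ _
    _ ≤ ‖p‖ := by
        rw [EuclideanSpace.norm_single]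
        simpa using norm_fst_le p
  | inr j =>
    calc |coef n (Sum.inr j) p| ≤ ‖EuclideanSpace.single (𝕜 := ℝ) j (1:ℝ)‖ * ‖p.2‖ :=
          abs_real_inner_le_norm _ _
    _ ≤ ‖p‖ := by
        rw [EuclideanSpace.norm_single]
        simpa using norm_snd_le p

/-- generic bound for an alternating map in terms of its values on basis tuples. -/
lemma alt_bound (T : (En n × En n) [⋀^Fin n]→ₗ[ℝ] ℝ) (v : Fin n → En n × En n) :
    |T v| ≤ (∑ J : Fin n → Fin n ⊕ Fin n, |T fun i => cvec n (J i)|) * ∏ i, ‖v i‖ := by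
  have hv : (fun i => ∑ j, coef n j (v i) • cvec n j) = v := funext fun i => repr_eq (v i)
  have h1 : T v = ∑ J : Fin n → Fin n ⊕ Fin n,
      (∏ i, coef n (J i) (v i)) • T (fun i => cvec n (J i)) := by
    conv_lhs => rw [← hv]
    have h := T.toMultilinearMap.map_sum (g := fun i j => coef n j (v i) • cvec n j)
    simp only [AlternatingMap.coe_multilinearMap] at h
    rw [h]
    refine Finset.sum_congr rfl fun J _ => ?_
    have h2 := T.toMultilinearMap.map_smul_univ (fun i => coef n (J i) (v i))
      (fun i => cvec n (J i))
    simpa using h2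
  calc |T v| ≤ ∑ J : Fin n → Fin n ⊕ Fin n,
      |(∏ i, coef n (J i) (v i)) • T (fun i => cvec n (J i))| := by
        rw [h1]; exact Finset.abs_sum_le_sum_abs _ _
  _ ≤ ∑ J : Fin n → Fin n ⊕ Fin n, (∏ i, ‖v i‖) * |T (fun i => cvec n (J i))| := by
      refine Finset.sum_le_sum fun J _ => ?_
      rw [smul_eq_mul, abs_mul]
      refine mul_le_mul_of_nonneg_right ?_ (abs_nonneg _)
      calc |∏ i, coef n (J i) (v i)| = ∏ i, |coef n (J i) (v i)| := by rw [Finset.abs_prod]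
      _ ≤ ∏ i, ‖v i‖ :=
          Finset.prod_le_prod (fun i _ => abs_nonneg _) (fun i _ => coef_abs_le _ _)
  _ = (∑ J : Fin n → Fin n ⊕ Fin n, |T fun i => cvec n (J i)|) * ∏ i, ‖v i‖ := by
      rw [← Finset.mul_sum, mul_comm]

/-- multilinear expansion into piecewise pieces. -/
lemma expand (T : (En n × En n) [⋀^Fin n]→ₗ[ℝ] ℝ) (bvec : Fin n → En n) (lam : Fin n → ℝ) :
    T (fun i => (bvec i, lam i • bvec i)) =
      ∑ s : Finset (Fin n), (∏ i ∈ s, lam i) •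
        T (s.piecewise (fun i => ((0 : En n), bvec i)) (fun i => (bvec i, (0 : En n)))) := by
  set w : Fin n → En n × En n := fun i => ((0 : En n), bvec i) with hw
  set m' : Fin n → En n × En n := fun i => (bvec i, (0 : En n)) with hm'
  have key : (fun i => ((bvec i : En n), lam i • bvec i)) = (fun i => lam i • w i) + m' := by
    funext i
    simp [w, m', Prod.ext_iff]
  rw [key]
  have h := T.toMultilinearMap.map_add_univ (fun i => lam i • w i) m'
  simp only [AlternatingMap.coe_multilinearMap] at h
  rw [h]
  refine Finset.sum_congr rfl fun s _ => ?_
  have hpw : s.piecewise (fun i => lam i • w i) m'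
      = s.piecewise (fun i => lam i • (s.piecewise w m') i) (s.piecewise w m') := by
    funext i
    by_cases hi : i ∈ s <;>
      simp [Finset.piecewise_eq_of_mem _ _ _, Finset.piecewise_eq_of_notMem _ _ _, hi]
  rw [hpw]
  have h2 := T.toMultilinearMap.map_piecewise_smul lam (s.piecewise w m') s
  simpa using h2

lemma hess_inner_nonneg (f : En n → ℝ) (hconv : ConvexOn ℝ Set.univ f)
    (hf2 : ContDiff ℝ 2 f) (x v : En n) :
    0 ≤ ⟪(fderiv ℝ (gradient f) x) v, v⟫ := by
  have hdf : Differentiable ℝ f := hf2.differentiable (by norm_num)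
  have h1 : ContDiff ℝ 1 (fderiv ℝ f) := hf2.fderiv_right (by norm_num)
  have hgradC : ContDiff ℝ 1 (gradient f) :=
    ((InnerProductSpace.toDual ℝ (En n)).symm.contDiff).comp h1
  have hgd : Differentiable ℝ (gradient f) := hgradC.differentiable (by norm_num)
  set q : ℝ → ℝ := fun t => ⟪gradient f (x + t • v), v⟫ with hq
  set φ : ℝ → ℝ := fun t => f (x + t • v) with hφ
  have hα : ∀ t : ℝ, HasDerivAt (fun s : ℝ => x + s • v) v t := by
    intro t
    simpa using ((hasDerivAt_id t).smul_const v).const_add x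
  have hgradinner : ∀ y w : En n, ⟪gradient f y, w⟫ = fderiv ℝ f y w := fun y w =>
    InnerProductSpace.toDual_symm_apply
  have hφ' : ∀ t, HasDerivAt φ (q t) t := by
    intro t
    have h := ((hdf (x + t • v)).hasFDerivAt).comp_hasDerivAt t (hα t)
    simpa [hq, hφ, hgradinner, Function.comp_def] using h
  have hconvφ : ConvexOn ℝ Set.univ φ := by
    have h := hconv.comp_affineMap (AffineMap.lineMap x (x + v))
    have he : (f ∘ AffineMap.lineMap x (x + v)) = φ := by
      funext t
      simp [hφ, AffineMap.lineMap_apply, add_comm]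
    rw [Set.preimage_univ, he] at h
    exact h
  have hmono : Monotone q := by
    intro s t hst
    have h := hconvφ.monotoneOn_deriv (fun y _ => (hφ' y).differentiableAt)
      (Set.mem_univ s) (Set.mem_univ t) hst
    rwa [(hφ' s).deriv, (hφ' t).deriv] at h
  have hq' : HasDerivAt q (⟪(fderiv ℝ (gradient f) x) v, v⟫) 0 := by
    have e : x + (0:ℝ) • v = x := by simp
    have hl : HasFDerivAt (gradient f) (fderiv ℝ (gradient f) x) (x + (0:ℝ) • v) := by
      rw [e]; exact (hgd x).hasFDerivAt
    have hcomp : HasDerivAt (fun t : ℝ => gradient f (x + t • v))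
        ((fderiv ℝ (gradient f) x) v) 0 := by
      simpa [Function.comp_def] using hl.comp_hasDerivAt 0 (hα 0)
    have h2 := HasDerivAt.inner ℝ hcomp (hasDerivAt_const (0:ℝ) v)
    simpa [hq] using h2
  have hslope := hasDerivAt_iff_tendsto_slope.1 hq'
  refine ge_of_tendsto hslope ?_
  filter_upwards [self_mem_nhdsWithin] with t ht
  have ht' : (t : ℝ) ≠ 0 := ht
  rw [slope_def_field]
  rcases lt_or_gt_of_ne ht' with h | h
  · apply div_nonneg_of_nonpos
    · simpa using sub_nonpos.2 (hmono h.le)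
    · simpa using sub_nonpos.2 h.le
  · apply div_nonneg
    · simpa using sub_nonneg.2 (hmono h.le)
    · simpa using sub_nonneg.2 h.le

lemma key_bound {n k : ℕ} (hk : k ≤ n) (T : (En n × En n) [⋀^Fin n]→ₗ[ℝ] ℝ) (C : ℝ)
    (hvf : ∀ v : Fin n → En n × En n,
      n - k + 1 ≤ (Finset.univ.filter fun i => (v i).2 = 0).card → T v = 0)
    (hvs : ∀ v : Fin n → En n × En n,
      k + 1 ≤ (Finset.univ.filter fun i => (v i).1 = 0).card → T v = 0)
    (hb : ∀ v : Fin n → En n × En n, |T v| ≤ C * ∏ i, ‖v i‖)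
    (bvec : Fin n → En n) (hbn : ∀ i, ‖bvec i‖ = 1)
    (lam : Fin n → ℝ) (hlam : ∀ i, 0 ≤ lam i) :
    |T fun i => (bvec i, lam i • bvec i)| ≤ C * esymm n k lam := by
  set W : Finset (Fin n) → Fin n → En n × En n := fun s =>
    s.piecewise (fun i => ((0 : En n), bvec i)) (fun i => (bvec i, (0 : En n))) with hW
  have hexp : (T fun i => (bvec i, lam i • bvec i))
      = ∑ s : Finset (Fin n), (∏ i ∈ s, lam i) • T (W s) := expand T bvec lam
  have hvan : ∀ s : Finset (Fin n), s.card ≠ k → T (W s) = 0 := by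
    intro s hs
    rcases lt_or_gt_of_ne hs with hlt | hgt
    · apply hvf
      have hsub : sᶜ ⊆ Finset.univ.filter fun i => ((W s i).2 = 0) := by
        intro i hi
        rw [Finset.mem_filter]
        refine ⟨Finset.mem_univ _, ?_⟩
        simp only [hW]
        rw [Finset.piecewise_eq_of_notMem _ _ _ (Finset.mem_compl.1 hi)]
      have hcard : n - s.card ≤ (Finset.univ.filter fun i => ((W s i).2 = 0)).card := by
        calc n - s.card = sᶜ.card := by rw [Finset.card_compl, Fintype.card_fin]
        _ ≤ _ := Finset.card_le_card hsub
      omega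
    · apply hvs
      have hsub : s ⊆ Finset.univ.filter fun i => ((W s i).1 = 0) := by
        intro i hi
        rw [Finset.mem_filter]
        refine ⟨Finset.mem_univ _, ?_⟩
        simp only [hW]
        rw [Finset.piecewise_eq_of_mem _ _ _ hi]
      have := Finset.card_le_card hsub
      omega
  have hWn : ∀ (s : Finset (Fin n)) i, ‖W s i‖ = 1 := by
    intro s i
    by_cases hi : i ∈ s
    · simp only [hW]
      rw [Finset.piecewise_eq_of_mem _ _ _ hi]
      simp [Prod.norm_def, hbn i]
    · simp only [hW]
      rw [Finset.piecewise_eq_of_notMem _ _ _ hi]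
      simp [Prod.norm_def, hbn i]
  have hWb : ∀ s : Finset (Fin n), |T (W s)| ≤ C := by
    intro s
    calc |T (W s)| ≤ C * ∏ i, ‖W s i‖ := hb _
    _ = C := by simp [hWn s]
  rw [hexp]
  calc |∑ s : Finset (Fin n), (∏ i ∈ s, lam i) • T (W s)|
      = |∑ s ∈ Finset.univ.filter (fun s : Finset (Fin n) => s.card = k),
          (∏ i ∈ s, lam i) • T (W s)| := by
        congr 1
        symm
        apply Finset.sum_filter_of_ne
        intro s _ hne
        by_contra hsk
        rw [hvan s hsk, smul_zero] at hne
        exact hne rfl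
  _ ≤ ∑ s ∈ Finset.univ.filter (fun s : Finset (Fin n) => s.card = k),
        |(∏ i ∈ s, lam i) • T (W s)| := Finset.abs_sum_le_sum_abs _ _
  _ ≤ ∑ s ∈ Finset.univ.filter (fun s : Finset (Fin n) => s.card = k),
        (∏ i ∈ s, lam i) * C := by
        refine Finset.sum_le_sum fun s _ => ?_
        rw [smul_eq_mul, abs_mul, abs_of_nonneg (Finset.prod_nonneg fun i _ => hlam i)]
        exact mul_le_mul_of_nonneg_left (hWb s) (Finset.prod_nonneg fun i _ => hlam i)
  _ = C * esymm n k lam := by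
        rw [← Finset.sum_mul, mul_comm]
        congr 1
        unfold esymm
        apply Finset.sum_congr
        · ext s
          simp [Finset.mem_powersetCard_univ]
        · intro s _
          rfl

end Stmt18Aux

open Stmt18Aux
open scoped RealInnerProductSpace

/-- If `ω` is a bidegree-`(n-k,k)` form, invariant under
translations in the second factor and homogeneous of degree `l > 0` in the first,
then there is `C ≥ 0` with
`|ω_{(x,∇f(x))}((e_1, D²f(x)e_1),…,(e_n, D²f(x)e_n))| ≤ C |x|^l e_k(λ₁,…,λₙ)` for
every convex `C²` function `f` and every `x`, where `λ₁,…,λₙ` are the eigenvalues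
(with multiplicity, realized by an orthonormal eigenbasis) of `D²f(x)`. -/
theorem stmt18 (n k : ℕ) (hn : 1 ≤ n) (hk : k ≤ n) (l : ℝ) (hl : 0 < l)
    (ω : BidegreeForm n k)
    (htrans : ∀ x ξ ξ' : En n, ω.form (x, ξ) = ω.form (x, ξ'))
    (hhom : ∀ t : ℝ, 0 < t → ∀ x ξ : En n, ω.form (t • x, ξ) = t ^ l • ω.form (x, ξ)) :
    ∃ C : ℝ, 0 ≤ C ∧
      ∀ f : En n → ℝ, ConvexOn ℝ Set.univ f → ContDiff ℝ 2 f → ∀ x : En n,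
        ∀ lam : Fin n → ℝ, ∀ bvec : Fin n → En n, Orthonormal ℝ bvec →
          (∀ i, hess f x (bvec i) = lam i • bvec i) →
          |ω.form (x, gradient f x)
              (fun i => (EuclideanSpace.single i 1, hess f x (EuclideanSpace.single i 1)))| ≤
            C * ‖x‖ ^ l * esymm n k lam := by
  haveI : Nonempty (Fin n) := ⟨⟨0, hn⟩⟩
  set g : En n × En n → ℝ :=
    fun p => ∑ J : Fin n → Fin n ⊕ Fin n, |ω.form p fun i => cvec n (J i)| with hg
  have hgcont : Continuous g := by
    apply continuous_finset_sum
    intro J _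
    exact (ω.cont _).abs
  have hgnonneg : ∀ p, 0 ≤ g p := fun p => Finset.sum_nonneg fun J _ => abs_nonneg _
  have hgbound : ∀ (p) (v : Fin n → En n × En n), |ω.form p v| ≤ g p * ∏ i, ‖v i‖ :=
    fun p v => alt_bound _ v
  have hsph : (Metric.sphere (0 : En n) 1).Nonempty := by
    refine ⟨EuclideanSpace.single ⟨0, hn⟩ (1 : ℝ), ?_⟩
    simp [EuclideanSpace.norm_single]
  obtain ⟨u₀, hu₀, hmax⟩ := (isCompact_sphere (0 : En n) 1).exists_isMaxOn hsph
    (Continuous.continuousOn (hgcont.comp (continuous_id.prodMk continuous_const)))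
  refine ⟨g (u₀, 0), hgnonneg _, ?_⟩
  set C := g (u₀, 0) with hC
  have hCb : ∀ u : En n, ‖u‖ = 1 → g (u, (0 : En n)) ≤ C := by
    intro u hu
    have hmem : u ∈ Metric.sphere (0 : En n) 1 := by
      simpa [mem_sphere_zero_iff_norm] using hu
    exact isMaxOn_iff.1 hmax u hmem
  intro f hconv hf2 x lam bvec horth heig
  have hlam : ∀ i, 0 ≤ lam i := by
    intro i
    have h : (0 : ℝ) ≤ ⟪hess f x (bvec i), bvec i⟫ :=
      hess_inner_nonneg f hconv hf2 x (bvec i)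
    rw [heig i, real_inner_smul_left, real_inner_self_eq_norm_sq, horth.1 i] at h
    simpa using h
  rcases eq_or_ne x 0 with rfl | hx
  · -- the case `x = 0`
    have h2 := hhom 2 (by norm_num) 0 (gradient f 0)
    rw [smul_zero] at h2
    have h3 : ((2 : ℝ) ^ l - 1) • ω.form ((0 : En n), gradient f 0) = 0 := by
      have h3' := sub_smul ((2 : ℝ) ^ l) 1 (ω.form ((0 : En n), gradient f 0))
      rw [one_smul, ← h2, sub_self] at h3'
      exact h3'
    have h4 : ω.form ((0 : En n), gradient f 0) = 0 := by
      rcases smul_eq_zero.1 h3 with h | h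
      · exfalso
        have h5 : (1 : ℝ) < 2 ^ l :=
          (Real.one_lt_rpow_iff_of_pos (by norm_num)).2 (Or.inl ⟨one_lt_two, hl⟩)
        rw [sub_eq_zero] at h
        rw [h] at h5
        exact lt_irrefl _ h5
      · exact h
    rw [h4]
    simp [Real.zero_rpow hl.ne']
  · -- the case `x ≠ 0`
    have hxn : (0 : ℝ) < ‖x‖ := norm_pos_iff.2 hx
    set u : En n := ‖x‖⁻¹ • x with hu
    have hun : ‖u‖ = 1 := by
      rw [hu, norm_smul, norm_inv, norm_norm, inv_mul_cancel₀ hxn.ne']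
    have hxu : ‖x‖ • u = x := smul_inv_smul₀ hxn.ne' x
    have hform : ω.form (x, gradient f x) = ‖x‖ ^ l • ω.form (u, (0 : En n)) := by
      calc ω.form (x, gradient f x) = ω.form (‖x‖ • u, gradient f x) := by rw [hxu]
      _ = ‖x‖ ^ l • ω.form (u, gradient f x) := hhom ‖x‖ hxn u (gradient f x)
      _ = ‖x‖ ^ l • ω.form (u, 0) := by rw [htrans u (gradient f x) 0]
    set T := ω.form (u, (0 : En n)) with hT
    set B := basisOfLinearIndependentOfCardEqFinrank horth.linearIndependent
      (by simp [finrank_euclideanSpace_fin]) with hBdef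
    have hB : ⇑B = bvec := coe_basisOfLinearIndependentOfCardEqFinrank _ _
    have horthB : Orthonormal ℝ ⇑B := by rw [hB]; exact horth
    have hdet : |B.det fun i => (EuclideanSpace.single i (1 : ℝ) : En n)| = 1 := by
      have h := (B.toOrthonormalBasis horthB).det_to_matrix_orthonormalBasis
        (EuclideanSpace.basisFun (Fin n) ℝ)
      rw [Module.Basis.toBasis_toOrthonormalBasis, Real.norm_eq_abs] at h
      have he : ⇑(EuclideanSpace.basisFun (Fin n) ℝ)
          = fun i => (EuclideanSpace.single i (1 : ℝ) : En n) := by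
        funext i; exact EuclideanSpace.basisFun_apply _ _ i
      rw [he] at h
      exact h
    set L : En n →ₗ[ℝ] En n × En n :=
      LinearMap.prod LinearMap.id (fderiv ℝ (gradient f) x).toLinearMap with hL
    set ψ := T.compLinearMap L with hψ
    have hstd : T (fun i => ((EuclideanSpace.single i (1 : ℝ) : En n),
          hess f x (EuclideanSpace.single i 1)))
        = ψ fun i => (EuclideanSpace.single i (1 : ℝ) : En n) := by
      rw [hψ, AlternatingMap.compLinearMap_apply]
      congr 1
    have hpsiB : (ψ fun i => (EuclideanSpace.single i (1 : ℝ) : En n))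
        = ψ bvec * B.det fun i => (EuclideanSpace.single i (1 : ℝ) : En n) := by
      conv_lhs => rw [ψ.eq_smul_basis_det B]
      rw [AlternatingMap.smul_apply, smul_eq_mul, hB]
    have hpsib : ψ bvec = T fun i => ((bvec i : En n), lam i • bvec i) := by
      rw [hψ, AlternatingMap.compLinearMap_apply]
      congr 1
      funext i
      rw [← heig i]
      rfl
    have hkey : |T fun i => ((bvec i : En n), lam i • bvec i)| ≤ C * esymm n k lam := by
      refine key_bound hk T C ?_ ?_ ?_ bvec horth.1 lam hlam
      · intro v hv
        rw [hT]
        exact ω.vanish_fst _ _ hv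
      · intro v hv
        rw [hT]
        exact ω.vanish_snd _ _ hv
      · intro v
        calc |T v| ≤ g (u, 0) * ∏ i, ‖v i‖ := by rw [hT]; exact hgbound _ v
        _ ≤ C * ∏ i, ‖v i‖ :=
            mul_le_mul_of_nonneg_right (hCb u hun)
              (Finset.prod_nonneg fun i _ => norm_nonneg _)
    have hTb : |T fun i => ((EuclideanSpace.single i (1 : ℝ) : En n),
          hess f x (EuclideanSpace.single i 1))| ≤ C * esymm n k lam := by
      rw [hstd, hpsiB, abs_mul, hdet, mul_one, hpsib]
      exact hkey
    rw [hform, AlternatingMap.smul_apply, smul_eq_mul, abs_mul,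
      abs_of_nonneg (Real.rpow_nonneg (norm_nonneg x) l)]
    refine le_trans (mul_le_mul_of_nonneg_left hTb (Real.rpow_nonneg (norm_nonneg x) l)) ?_
    exact le_of_eq (by ring)
end
end
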